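/- Let p be an odd prime, q = p^r, and d ≥ 3 odd with p ∤ d(d−1). For every integer m with 0 ≤ m ≤ q−2, m ≠ (q−1)/2, and every i with 0 ≤ i ≤ r−1, one has ⌊−2mp^i/(q−1)⌋ + ⌊2mdp^i/(q−1)⌋ + ⌊−2m(d−1)p^i/(q−1)⌋ − ⌊−mp^i/(q−1)⌋ − ⌊mdp^i/(q−1)⌋ − ⌊−m(d−1)p^i/(q−1)⌋ = Σ_{h odd, 1 ≤ h ≤ 2d−3} ⌊⟨hp^i/(2(d−1))⟩ − mp^i/(q−1)⌋ + Σ_{h odd, 1 ≤ h ≤ 2d−1, h ≠ d} ⌊⟨−hp^i/(2d)⟩ + mp^i/(q−1)⌋. -/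

import Mathlib

lemma floorq_div_nat (a : ℚ) (n : ℕ) (hn : 0 < n) : ⌊a / n⌋ = ⌊a⌋ / (n : ℤ) := by
  have hn0 : ((n : ℤ) : ℚ) ≠ 0 := by exact_mod_cast hn.ne'
  have hnq : (0 : ℚ) < (n : ℚ) := by exact_mod_cast hn
  have hnz : (0 : ℤ) < (n : ℤ) := by exact_mod_cast hn
  have hde := Int.mul_ediv_add_emod ⌊a⌋ (n : ℤ)
  have h2 : 0 ≤ ⌊a⌋ % (n : ℤ) := Int.emod_nonneg _ hnz.ne'
  have h3 : ⌊a⌋ % (n : ℤ) < n := Int.emod_lt_of_pos _ hnz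
  rw [Int.floor_eq_iff]
  constructor
  · rw [le_div_iff₀ hnq]
    have : ((n : ℤ) * (⌊a⌋ / (n : ℤ)) : ℤ) ≤ ⌊a⌋ := by omega
    calc ((⌊a⌋ / (n : ℤ) : ℤ) : ℚ) * n = (((n : ℤ) * (⌊a⌋ / (n : ℤ)) : ℤ) : ℚ) := by
          push_cast; ring
      _ ≤ (⌊a⌋ : ℚ) := by exact_mod_cast this
      _ ≤ a := Int.floor_le a
  · rw [div_lt_iff₀ hnq]
    have : ⌊a⌋ + 1 ≤ ((⌊a⌋ / (n : ℤ) + 1) * (n : ℤ) : ℤ) := by nlinarith [hde, h3]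
    calc a < (⌊a⌋ : ℚ) + 1 := Int.lt_floor_add_one a
      _ ≤ (((⌊a⌋ / (n : ℤ) + 1) * (n : ℤ) : ℤ) : ℚ) := by exact_mod_cast this
      _ = (((⌊a⌋ / (n : ℤ) : ℤ) : ℚ) + 1) * (n : ℚ) := by push_cast; ring

lemma floor_add_div (y : ℚ) (N : ℕ) (hN : 0 < N) (h : ℕ) :
    ⌊y + (h : ℚ) / N⌋ = (⌊(N : ℚ) * y⌋ + h) / (N : ℤ) := by
  have hNq : ((N : ℚ)) ≠ 0 := by exact_mod_cast hN.ne'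
  have e1 : y + (h : ℚ) / N = ((N : ℚ) * y + h) / N := by field_simp
  rw [e1, floorq_div_nat _ _ hN]
  congr 1
  rw [show ((h : ℚ)) = ((h : ℤ) : ℚ) by push_cast; rfl, Int.floor_add_intCast]

lemma int_hermite (n : ℕ) (hn : 0 < n) (M : ℤ) :
    ∑ j ∈ Finset.range n, (M + (2 * j + 1)) / (2 * (n : ℤ)) = M - M / 2 := by
  set s : ℤ := M / (2 * n) with hs
  set t : ℤ := M % (2 * n) with ht
  have hnz : (0:ℤ) < 2 * n := by positivity
  have ht0 : 0 ≤ t := Int.emod_nonneg _ hnz.ne'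
  have ht1 : t < 2 * n := Int.emod_lt_of_pos _ hnz
  have hM : M = 2 * n * s + t := by
    have := Int.mul_ediv_add_emod M (2 * n); rw [hs, ht]; linarith
  have term : ∀ j ∈ Finset.range n,
      (M + (2 * (j:ℤ) + 1)) / (2 * (n:ℤ)) = s + if 2 * (n:ℤ) ≤ t + 2 * j + 1 then 1 else 0 := by
    intro j hj
    have hjn : (j : ℤ) < n := by exact_mod_cast Finset.mem_range.mp hj
    have e : M + (2 * (j:ℤ) + 1) = (t + 2 * j + 1) + s * (2 * n) := by rw [hM]; ring
    rw [e, Int.add_mul_ediv_right _ _ hnz.ne']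
    have hb0 : 0 ≤ t + 2 * j + 1 := by omega
    have hb1 : t + 2 * j + 1 < 2 * (2 * n) := by omega
    by_cases hc : 2 * (n:ℤ) ≤ t + 2 * j + 1
    · rw [if_pos hc]
      have : (t + 2 * j + 1) / (2 * n) = 1 := by
        have : t + 2 * j + 1 = (t + 2 * j + 1 - 2 * n) + 1 * (2 * n) := by ring
        rw [this, Int.add_mul_ediv_right _ _ hnz.ne',
          Int.ediv_eq_zero_of_lt (by omega) (by omega)]
        norm_num
      omega
    · rw [if_neg hc, Int.ediv_eq_zero_of_lt hb0 (by omega)]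
      omega
  rw [Finset.sum_congr rfl term, Finset.sum_add_distrib, Finset.sum_const, Finset.sum_boole]
  have hcard : ((Finset.range n).filter (fun j : ℕ => 2 * (n:ℤ) ≤ t + 2 * j + 1)).card
      = (t + 1).toNat / 2 := by
    have heq : (Finset.range n).filter (fun j : ℕ => 2 * (n:ℤ) ≤ t + 2 * j + 1)
        = Finset.Ico (n - (t + 1).toNat / 2) n := by
      ext j
      simp only [Finset.mem_filter, Finset.mem_range, Finset.mem_Ico]
      omega
    rw [heq, Nat.card_Ico]
    omega
  rw [hcard]
  have hcast : (((t + 1).toNat / 2 : ℕ) : ℤ) = (t + 1) / 2 := by omega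
  simp only [Finset.card_range, nsmul_eq_mul, hcast]
  have h2 : (2 * (n:ℤ) * s + t) / 2 = (n:ℤ) * s + t / 2 := by
    rw [show 2 * (n:ℤ) * s + t = t + (n * s) * 2 by ring,
      Int.add_mul_ediv_right _ _ (by norm_num : (2:ℤ) ≠ 0)]
    ring
  rw [hM, h2]
  have h3 : (t + 1) / 2 = t - t / 2 := by omega
  linarith [h3]

lemma hermite_odd (n : ℕ) (hn : 0 < n) (y : ℚ) :
    ∑ h ∈ (Finset.Icc 1 (2 * n - 1)).filter (fun h => Odd h), ⌊y + (h : ℚ) / (2 * n)⌋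
      = ⌊2 * (n : ℚ) * y⌋ - ⌊(n : ℚ) * y⌋ := by
  have himg : (Finset.Icc 1 (2 * n - 1)).filter (fun h => Odd h)
      = (Finset.range n).image (fun j => 2 * j + 1) := by
    ext h
    simp only [Finset.mem_filter, Finset.mem_Icc, Finset.mem_image, Finset.mem_range,
      Nat.odd_iff]
    constructor
    · rintro ⟨⟨h1, h2⟩, h3⟩; exact ⟨h / 2, by omega, by omega⟩
    · rintro ⟨j, hj, rfl⟩; omega
  rw [himg, Finset.sum_image (by intro a _ b _ hab; beta_reduce at hab; omega)]
  have h2n : 0 < 2 * n := by omega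
  have step : ∀ j ∈ Finset.range n,
      ⌊y + ((2 * j + 1 : ℕ) : ℚ) / (2 * (n:ℚ))⌋ = (⌊2 * (n:ℚ) * y⌋ + (2*(j:ℤ)+1)) / (2 * (n:ℤ)) := by
    intro j _
    have := floor_add_div y (2 * n) h2n (2 * j + 1)
    push_cast at this ⊢
    convert this using 3 <;> push_cast <;> ring
  rw [Finset.sum_congr rfl step]
  have hfl : ⌊(n : ℚ) * y⌋ = ⌊2 * (n:ℚ) * y⌋ / 2 := by
    have : (n : ℚ) * y = (2 * (n:ℚ) * y) / 2 := by ring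
    rw [this, show ((2:ℚ)) = ((2:ℕ):ℚ) by norm_num, floorq_div_nat _ 2 (by norm_num)]
    norm_num
  rw [hfl]
  exact int_hermite n hn ⌊2 * (n:ℚ) * y⌋

section bij
variable (e : ℕ)

lemma mod_cancel {e w w' : ℕ} (hww' : w * w' % e = 1) :
    ∀ h, h < e → (h * w % e) * w' % e = h := by
  intro h hh
  calc (h * w % e) * w' % e = (h * w) * w' % e := Nat.mod_mul_mod _ _ _
    _ = h * (w * w') % e := by ring_nf
    _ = (h % e) * ((w * w') % e) % e := Nat.mul_mod _ _ _
    _ = h := by rw [hww', Nat.mod_eq_of_lt hh, mul_one, Nat.mod_eq_of_lt hh]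

lemma mod_mem {e w : ℕ} (he : 2 ≤ e) (he2 : 2 ∣ e) (hw : Odd w)
    {w' : ℕ} (hww' : w * w' % e = 1)
    {h : ℕ} (hh : h ∈ (Finset.Icc 1 (e - 1)).filter (fun h => Odd h)) :
    h * w % e ∈ (Finset.Icc 1 (e - 1)).filter (fun h => Odd h) := by
  simp only [Finset.mem_filter, Finset.mem_Icc, Nat.odd_iff] at hh ⊢
  obtain ⟨⟨h1, h2⟩, h3⟩ := hh
  have hlt : h < e := by omega
  have hmod : h * w % e < e := Nat.mod_lt _ (by omega)
  have hoddw : w % 2 = 1 := Nat.odd_iff.mp hw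
  have hpar : (h * w % e) % 2 = 1 := by
    rw [Nat.mod_mod_of_dvd _ he2, Nat.mul_mod]
    simp [h3, hoddw]
  have hne : h * w % e ≠ 0 := by
    intro h0
    have := mod_cancel hww' h hlt
    rw [h0] at this
    simp at this
    omega
  exact ⟨⟨by omega, by omega⟩, hpar⟩

lemma sum_mod_bij (e u v : ℕ) (he : 2 ≤ e) (he2 : 2 ∣ e) (hu : Odd u)
    (huv : u * v % e = 1) (f : ℕ → ℤ) :
    ∑ h ∈ (Finset.Icc 1 (e - 1)).filter (fun h => Odd h), f (h * u % e)
      = ∑ h ∈ (Finset.Icc 1 (e - 1)).filter (fun h => Odd h), f h := by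
  have hvu : v * u % e = 1 := by rwa [mul_comm] at huv
  have hv : Odd v := by
    rcases Nat.even_or_odd v with hev | hov
    · exfalso
      have : (u * v) % 2 = 0 := by
        rcases hev with ⟨c, hc⟩
        subst hc
        exact Nat.even_iff.mp ⟨u * c, by ring⟩
      have h2 : (u * v % e) % 2 = (u * v) % 2 := Nat.mod_mod_of_dvd _ he2
      rw [huv, this] at h2
      simp at h2
    · exact hov
  refine Finset.sum_nbij' (i := fun h => h * u % e) (j := fun h => h * v % e)
    (fun a ha => mod_mem he he2 hu huv ha)
    (fun a ha => mod_mem he he2 hv hvu ha) ?_ ?_ ?_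
  · intro a ha
    simp only [Finset.mem_filter, Finset.mem_Icc] at ha
    exact mod_cancel huv a (by omega)
  · intro a ha
    simp only [Finset.mem_filter, Finset.mem_Icc] at ha
    exact mod_cancel hvu a (by omega)
  · intro a _; rfl

lemma sum_mod_bij_ne (c u v : ℕ) (hc : Odd c) (hc1 : 1 ≤ c) (hu : Odd u)
    (huv : u * v % (2 * c) = 1) (f : ℕ → ℤ) :
    ∑ h ∈ (Finset.Icc 1 (2 * c - 1)).filter (fun h => Odd h ∧ h ≠ c),
        f (2 * c - h * u % (2 * c))
      = ∑ h ∈ (Finset.Icc 1 (2 * c - 1)).filter (fun h => Odd h ∧ h ≠ c), f h := by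
  set e := 2 * c with he_def
  have he : 2 ≤ e := by omega
  have he2 : 2 ∣ e := ⟨c, rfl⟩
  have hvu : v * u % e = 1 := by rwa [mul_comm] at huv
  have hv : Odd v := by
    rcases Nat.even_or_odd v with hev | hov
    · exfalso
      have : (u * v) % 2 = 0 := by
        rcases hev with ⟨k, hk⟩; subst hk
        exact Nat.even_iff.mp ⟨u * k, by ring⟩
      have h2 : (u * v % e) % 2 = (u * v) % 2 := Nat.mod_mod_of_dvd _ he2
      rw [huv, this] at h2
      simp at h2
    · exact hov
  -- c is a fixed point mod e of multiplication by any odd number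
  have hfix : ∀ w : ℕ, Odd w → c * w % e = c := by
    intro w hw
    obtain ⟨k, hk⟩ := hw
    subst hk
    have : c * (2 * k + 1) = e * k + c := by rw [he_def]; ring
    rw [this, Nat.mul_add_mod, Nat.mod_eq_of_lt (by omega)]
  -- membership facts
  have hmem : ∀ w w' : ℕ, Odd w → (w * w' % e = 1) →
      ∀ h ∈ (Finset.Icc 1 (e - 1)).filter (fun h => Odd h ∧ h ≠ c),
      h * w % e ∈ (Finset.Icc 1 (e - 1)).filter (fun h => Odd h ∧ h ≠ c) := by
    intro w w' hw hww' h hh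
    simp only [Finset.mem_filter, Finset.mem_Icc, Nat.odd_iff] at hh ⊢
    obtain ⟨⟨h1, h2⟩, h3, h4⟩ := hh
    have hlt : h < e := by omega
    have hoddw : w % 2 = 1 := Nat.odd_iff.mp hw
    have hpar : (h * w % e) % 2 = 1 := by
      rw [Nat.mod_mod_of_dvd _ he2, Nat.mul_mod]
      simp [h3, hoddw]
    have hne : h * w % e ≠ 0 := by
      intro h0
      have := mod_cancel hww' h hlt
      rw [h0] at this
      simp at this
      omega
    have hnec : h * w % e ≠ c := by
      intro h0
      have hcan := mod_cancel hww' h hlt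
      rw [h0] at hcan
      have hw' : Odd w' := by
        rcases Nat.even_or_odd w' with hev | hov
        · exfalso
          have : (w * w') % 2 = 0 := by
            rcases hev with ⟨k, hk⟩; subst hk
            exact Nat.even_iff.mp ⟨w * k, by ring⟩
          have h2' : (w * w' % e) % 2 = (w * w') % 2 := Nat.mod_mod_of_dvd _ he2
          rw [hww', this] at h2'
          simp at h2'
        · exact hov
      rw [hfix w' hw'] at hcan
      exact h4 hcan.symm
    have hmod : h * w % e < e := Nat.mod_lt _ (by omega)
    exact ⟨⟨by omega, by omega⟩, hpar, hnec⟩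
  -- flip map h ↦ e - h on the set
  have hflipmem : ∀ h ∈ (Finset.Icc 1 (e - 1)).filter (fun h => Odd h ∧ h ≠ c),
      e - h ∈ (Finset.Icc 1 (e - 1)).filter (fun h => Odd h ∧ h ≠ c) := by
    intro h hh
    simp only [Finset.mem_filter, Finset.mem_Icc, Nat.odd_iff] at hh ⊢
    omega
  refine Finset.sum_nbij' (i := fun h => e - h * u % e) (j := fun h => (e - h) * v % e)
    ?_ ?_ ?_ ?_ ?_
  · intro a ha
    exact hflipmem _ (hmem u v hu huv a ha)
  · intro a ha
    exact hmem v u hv hvu _ (hflipmem a ha)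
  · intro a ha
    simp only [Finset.mem_filter, Finset.mem_Icc] at ha
    have h1 : a * u % e < e := Nat.mod_lt _ (by omega)
    show (e - (e - a * u % e)) * v % e = a
    have : e - (e - a * u % e) = a * u % e := by omega
    rw [this]
    exact mod_cancel huv a (by omega)
  · intro a ha
    simp only [Finset.mem_filter, Finset.mem_Icc] at ha
    have hlt : e - a < e := by omega
    show e - ((e - a) * v % e) * u % e = a
    have : ((e - a) * v % e) * u % e = e - a := mod_cancel hvu (e - a) hlt
    rw [this]
    omega
  · intro a _; rfl
end bij

lemma fract_neg_div (a e : ℕ) (he : 0 < e) (hne : a % e ≠ 0) :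
    Int.fract (-(a : ℚ) / e) = ((e - a % e : ℕ) : ℚ) / e := by
  have hc : a % e < e := Nat.mod_lt _ he
  have ha : a = e * (a / e) + a % e := (Nat.div_add_mod a e).symm
  have he0 : (e : ℚ) ≠ 0 := by positivity
  have heq : -(a : ℚ) / e = ((e - a % e : ℕ) : ℚ) / e + ((-(a / e : ℕ) - 1 : ℤ) : ℚ) := by
    have haq : (a : ℚ) = (e : ℚ) * ((a / e : ℕ) : ℚ) + ((a % e : ℕ) : ℚ) := by
      exact_mod_cast ha
    have heq0 : ((e - a % e : ℕ) : ℚ) = (e : ℚ) - ((a % e : ℕ) : ℚ) := by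
      push_cast [Nat.cast_sub hc.le]; ring
    have hcast : ((-(a / e : ℕ) - 1 : ℤ) : ℚ) = -(((a / e : ℕ) : ℚ)) - 1 := by
      rw [Int.cast_sub, Int.cast_neg, Int.cast_natCast, Int.cast_one]
    rw [heq0, hcast, haq]
    field_simp
    ring
  rw [heq, Int.fract_add_intCast, Int.fract_eq_self.mpr ⟨by positivity, ?_⟩]
  rw [div_lt_one (by positivity)]
  have : e - a % e < e := by omega
  exact_mod_cast this

lemma floor_half_pair (x : ℚ) (h : ∀ k : ℤ, x + 1/2 ≠ (k : ℚ)) :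
    ⌊-x + 1/2⌋ + ⌊x + 1/2⌋ = 0 := by
  set t := x + 1/2 with ht
  have hne : t ≠ (⌊t⌋ : ℚ) := h ⌊t⌋
  have hlt : (⌊t⌋ : ℚ) < t := (Int.floor_le t).lt_of_ne (Ne.symm hne)
  have h1 : -x + 1/2 = -t + ((1 : ℤ) : ℚ) := by rw [ht]; push_cast; ring
  rw [h1, Int.floor_add_intCast]
  have h2 : ⌊-t⌋ = -⌊t⌋ - 1 := by
    rw [Int.floor_eq_iff]
    constructor
    · push_cast
      linarith [Int.lt_floor_add_one t]
    · push_cast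
      linarith
  omega

lemma floor_two_mul (y : ℚ) : ⌊2 * y⌋ - ⌊y⌋ = ⌊y + 1/2⌋ := by
  have h := hermite_odd 1 one_pos y
  norm_num [Finset.Icc_self, Finset.filter_singleton] at h
  omega
theorem stmt10 (p r d q : ℕ) (hp : p.Prime) (hodd : Odd p) (hr : 0 < r)
    (hq : q = p ^ r) (hd : 3 ≤ d) (hdo : Odd d) (hpd : ¬ p ∣ d * (d - 1))
    (m : ℕ) (hm2 : m ≤ q - 2) (hm3 : m ≠ (q - 1) / 2)
    (i : ℕ) (hi : i ≤ r - 1) :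
    ⌊(-2 * (m : ℚ) * (p : ℚ) ^ i) / ((q : ℚ) - 1)⌋ +
      ⌊(2 * (m : ℚ) * d * (p : ℚ) ^ i) / ((q : ℚ) - 1)⌋ +
      ⌊(-2 * (m : ℚ) * ((d : ℚ) - 1) * (p : ℚ) ^ i) / ((q : ℚ) - 1)⌋ -
      ⌊(-(m : ℚ) * (p : ℚ) ^ i) / ((q : ℚ) - 1)⌋ -
      ⌊((m : ℚ) * d * (p : ℚ) ^ i) / ((q : ℚ) - 1)⌋ -
      ⌊(-(m : ℚ) * ((d : ℚ) - 1) * (p : ℚ) ^ i) / ((q : ℚ) - 1)⌋ =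
    (∑ h ∈ (Finset.Icc 1 (2 * d - 3)).filter (fun h => Odd h),
        ⌊Int.fract (((h : ℚ) * (p : ℚ) ^ i) / (2 * ((d : ℚ) - 1))) -
          ((m : ℚ) * (p : ℚ) ^ i) / ((q : ℚ) - 1)⌋) +
      ∑ h ∈ (Finset.Icc 1 (2 * d - 1)).filter (fun h => Odd h ∧ h ≠ d),
        ⌊Int.fract ((-(h : ℚ) * (p : ℚ) ^ i) / (2 * (d : ℚ))) +
          ((m : ℚ) * (p : ℚ) ^ i) / ((q : ℚ) - 1)⌋ := by
  -- basic numerology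
  have hp3 : 3 ≤ p := by
    have := hp.two_le
    rcases hodd with ⟨k, hk⟩
    omega
  have hqp : p ≤ q := by
    rw [hq]; exact Nat.le_self_pow hr.ne' p
  have hq3 : 3 ≤ q := le_trans hp3 hqp
  have hqodd : Odd q := by rw [hq]; exact hodd.pow
  have hnev : (q - 1) % 2 = 0 := by
    rcases hqodd with ⟨k, hk⟩; omega
  have hu : Odd (p ^ i) := hodd.pow
  set D := d - 1 with hDdef
  have hD2 : 2 ≤ D := by omega
  have hDq : ((d : ℚ) - 1) = (D : ℚ) := by
    rw [hDdef]; push_cast [Nat.cast_sub (by omega : 1 ≤ d)]; ring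
  have hdq : (d : ℚ) = (D : ℚ) + 1 := by rw [← hDq]; ring
  -- coprimality and modular inverses
  have hpd1 : ¬ p ∣ d := fun h => hpd (Dvd.dvd.mul_right h _)
  have hpd2 : ¬ p ∣ D := fun h => hpd (Dvd.dvd.mul_left h _)
  have hp2 : ¬ p ∣ 2 := fun h => by have := Nat.le_of_dvd (by norm_num) h; omega
  have hcop1 : Nat.Coprime (p ^ i) (2 * D) := by
    apply Nat.Coprime.pow_left
    exact (Nat.coprime_mul_iff_right).mpr
      ⟨hp.coprime_iff_not_dvd.mpr hp2, hp.coprime_iff_not_dvd.mpr hpd2⟩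
  have hcop2 : Nat.Coprime (p ^ i) (2 * d) := by
    apply Nat.Coprime.pow_left
    exact (Nat.coprime_mul_iff_right).mpr
      ⟨hp.coprime_iff_not_dvd.mpr hp2, hp.coprime_iff_not_dvd.mpr hpd1⟩
  obtain ⟨v1, -, hv1⟩ := Nat.exists_mul_mod_eq_one_of_coprime hcop1 (by omega)
  obtain ⟨v2, -, hv2⟩ := Nat.exists_mul_mod_eq_one_of_coprime hcop2 (by omega)
  -- coprimality with q - 1
  have hpq1 : ¬ p ∣ (q - 1) := by
    intro hdvd
    have h1 : p ∣ q := by rw [hq]; exact dvd_pow_self p hr.ne'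
    have h2 : p ∣ q - (q - 1) := Nat.dvd_sub h1 hdvd
    rw [show q - (q - 1) = 1 by omega] at h2
    exact hp.one_lt.ne' (Nat.eq_one_of_dvd_one h2 ▸ rfl)
  have hcopq : Nat.Coprime (q - 1) (p ^ i) :=
    ((hp.coprime_iff_not_dvd.mpr hpq1).symm).pow_right i
  -- the main rational variable
  have hq1 : ((q : ℚ) - 1) = ((q - 1 : ℕ) : ℚ) := by
    push_cast [Nat.cast_sub (by omega : 1 ≤ q)]; ring
  have hqne : ((q : ℚ) - 1) ≠ 0 := by
    rw [hq1]
    have : (0 : ℚ) < ((q - 1 : ℕ) : ℚ) := by exact_mod_cast (by omega : 0 < q - 1)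
    linarith
  set X : ℚ := (m : ℚ) * (p : ℚ) ^ i / ((q : ℚ) - 1) with hXdef
  -- X + 1/2 is never an integer
  have hni : ∀ k : ℤ, X + 1/2 ≠ (k : ℚ) := by
    intro k hk
    have hXmul : X * ((q : ℚ) - 1) = (m : ℚ) * (p : ℚ) ^ i := by
      rw [hXdef, div_mul_cancel₀ _ hqne]
    have h1 : 2 * (m : ℚ) * (p : ℚ) ^ i + ((q : ℚ) - 1) = 2 * (k : ℚ) * ((q : ℚ) - 1) := by
      linear_combination -2 * hXmul + 2 * ((q : ℚ) - 1) * hk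
    rw [hq1] at h1
    have hZ : 2 * (m : ℤ) * (p : ℤ) ^ i + ((q - 1 : ℕ) : ℤ) = 2 * k * ((q - 1 : ℕ) : ℤ) := by
      exact_mod_cast h1
    have hdvdZ : ((q - 1 : ℕ) : ℤ) ∣ ((2 * m * p ^ i : ℕ) : ℤ) := by
      refine ⟨2 * k - 1, ?_⟩
      push_cast
      linarith
    have hdvdN : (q - 1) ∣ 2 * m * p ^ i := Int.natCast_dvd_natCast.mp hdvdZ
    have hdvd2m : (q - 1) ∣ 2 * m := hcopq.dvd_of_dvd_mul_right hdvdN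
    obtain ⟨c, hc⟩ := hdvd2m
    have hclt : c < 2 := by
      by_contra hge
      push_neg at hge
      have h2 : (q - 1) * 2 ≤ (q - 1) * c := Nat.mul_le_mul_left _ hge
      omega
    interval_cases c
    · -- 2m = 0
      have hm0 : m = 0 := by omega
      rw [hm0] at hZ
      push_cast at hZ
      have : (2 * k - 1) * ((q - 1 : ℕ) : ℤ) = 0 := by linarith
      rcases mul_eq_zero.mp this with h | h
      · omega
      · have : (q - 1 : ℕ) = 0 := by exact_mod_cast h
        omega
    · omega
  -- first sum
  have hS1 : Finset.Icc 1 (2 * d - 3) = Finset.Icc 1 (2 * D - 1) := by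
    congr 1; omega
  have sum1 : (∑ h ∈ (Finset.Icc 1 (2 * d - 3)).filter (fun h => Odd h),
        ⌊Int.fract (((h : ℚ) * (p : ℚ) ^ i) / (2 * ((d : ℚ) - 1))) - X⌋)
      = ⌊2 * (D : ℚ) * (-X)⌋ - ⌊(D : ℚ) * (-X)⌋ := by
    rw [hS1]
    calc ∑ h ∈ (Finset.Icc 1 (2 * D - 1)).filter (fun h => Odd h),
          ⌊Int.fract (((h : ℚ) * (p : ℚ) ^ i) / (2 * ((d : ℚ) - 1))) - X⌋
        = ∑ h ∈ (Finset.Icc 1 (2 * D - 1)).filter (fun h => Odd h),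
          (fun h' : ℕ => ⌊-X + (h' : ℚ) / (2 * (D : ℚ))⌋) (h * p ^ i % (2 * D)) := by
          refine Finset.sum_congr rfl fun h hh => ?_
          rw [show ((h : ℚ) * (p : ℚ) ^ i) / (2 * ((d : ℚ) - 1))
              = ((h * p ^ i : ℕ) : ℚ) / ((2 * D : ℕ) : ℚ) from by
            rw [hDq]; push_cast; ring]
          rw [Int.fract_div_natCast_eq_div_natCast_mod]
          simp only []
          congr 1
          push_cast
          ring
      _ = ∑ h ∈ (Finset.Icc 1 (2 * D - 1)).filter (fun h => Odd h),
          ⌊-X + (h : ℚ) / (2 * (D : ℚ))⌋ :=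
          sum_mod_bij (2 * D) (p ^ i) v1 (by omega) ⟨D, rfl⟩ hu hv1
            (fun h' : ℕ => ⌊-X + (h' : ℚ) / (2 * (D : ℚ))⌋)
      _ = ⌊2 * (D : ℚ) * (-X)⌋ - ⌊(D : ℚ) * (-X)⌋ := hermite_odd D (by omega) (-X)
  -- second sum
  have sum2 : (∑ h ∈ (Finset.Icc 1 (2 * d - 1)).filter (fun h => Odd h ∧ h ≠ d),
        ⌊Int.fract ((-(h : ℚ) * (p : ℚ) ^ i) / (2 * (d : ℚ))) + X⌋)
      = ⌊2 * (d : ℚ) * X⌋ - ⌊(d : ℚ) * X⌋ - ⌊X + 1/2⌋ := by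
    have hstep1 : (∑ h ∈ (Finset.Icc 1 (2 * d - 1)).filter (fun h => Odd h ∧ h ≠ d),
          ⌊Int.fract ((-(h : ℚ) * (p : ℚ) ^ i) / (2 * (d : ℚ))) + X⌋)
        = ∑ h ∈ (Finset.Icc 1 (2 * d - 1)).filter (fun h => Odd h ∧ h ≠ d),
          (fun h' : ℕ => ⌊X + (h' : ℚ) / (2 * (d : ℚ))⌋) (2 * d - h * p ^ i % (2 * d)) := by
      refine Finset.sum_congr rfl fun h hh => ?_
      simp only [Finset.mem_filter, Finset.mem_Icc] at hh
      obtain ⟨⟨hh1, hh2⟩, hh3, hh4⟩ := hh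
      have hne0 : (h * p ^ i) % (2 * d) ≠ 0 := by
        intro h0
        have := mod_cancel hv2 h (by omega)
        rw [h0] at this
        simp at this
        omega
      rw [show (-(h : ℚ) * (p : ℚ) ^ i) / (2 * (d : ℚ))
          = -((h * p ^ i : ℕ) : ℚ) / ((2 * d : ℕ) : ℚ) from by push_cast; ring]
      rw [fract_neg_div _ _ (by omega) hne0]
      simp only []
      rw [add_comm]
      congr 2
      push_cast
      ring
    rw [hstep1, sum_mod_bij_ne d (p ^ i) v2 hdo (by omega) hu hv2
      (fun h' : ℕ => ⌊X + (h' : ℚ) / (2 * (d : ℚ))⌋)]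
    have hdmem : d ∈ (Finset.Icc 1 (2 * d - 1)).filter (fun h => Odd h) := by
      simp only [Finset.mem_filter, Finset.mem_Icc]
      exact ⟨⟨by omega, by omega⟩, hdo⟩
    have herase : (Finset.Icc 1 (2 * d - 1)).filter (fun h => Odd h ∧ h ≠ d)
        = ((Finset.Icc 1 (2 * d - 1)).filter (fun h => Odd h)).erase d := by
      ext h
      simp only [Finset.mem_filter, Finset.mem_Icc, Finset.mem_erase]
      tauto
    rw [herase]
    have hkey := Finset.add_sum_erase ((Finset.Icc 1 (2 * d - 1)).filter (fun h => Odd h))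
      (fun h : ℕ => ⌊X + (h : ℚ) / (2 * (d : ℚ))⌋) hdmem
    have hherm := hermite_odd d (by omega) X
    have hhalf : (d : ℚ) / (2 * (d : ℚ)) = 1/2 := by
      have : (d : ℚ) ≠ 0 := by
        have : (0 : ℚ) < (d : ℚ) := by exact_mod_cast (by omega : 0 < d)
        linarith
      field_simp
    have hkey2 : ⌊X + (d : ℚ) / (2 * (d : ℚ))⌋
        + ∑ x ∈ ((Finset.Icc 1 (2 * d - 1)).filter (fun h => Odd h)).erase d,
            ⌊X + (x : ℚ) / (2 * (d : ℚ))⌋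
        = ∑ x ∈ (Finset.Icc 1 (2 * d - 1)).filter (fun h => Odd h),
            ⌊X + (x : ℚ) / (2 * (d : ℚ))⌋ := hkey
    rw [hhalf] at hkey2
    omega
  rw [sum1, sum2]
  -- rewrite left-hand floors
  rw [show (-2 * (m : ℚ) * (p : ℚ) ^ i) / ((q : ℚ) - 1) = 2 * (-X) from by
      rw [hXdef]; ring]
  rw [show (2 * (m : ℚ) * (d : ℚ) * (p : ℚ) ^ i) / ((q : ℚ) - 1) = 2 * (d : ℚ) * X from by
      rw [hXdef]; ring]
  rw [show (-2 * (m : ℚ) * ((d : ℚ) - 1) * (p : ℚ) ^ i) / ((q : ℚ) - 1)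
      = 2 * (D : ℚ) * (-X) from by rw [hXdef, hDq]; ring]
  rw [show (-(m : ℚ) * (p : ℚ) ^ i) / ((q : ℚ) - 1) = -X from by rw [hXdef]; ring]
  rw [show ((m : ℚ) * (d : ℚ) * (p : ℚ) ^ i) / ((q : ℚ) - 1) = (d : ℚ) * X from by
      rw [hXdef]; ring]
  rw [show (-(m : ℚ) * ((d : ℚ) - 1) * (p : ℚ) ^ i) / ((q : ℚ) - 1)
      = (D : ℚ) * (-X) from by rw [hXdef, hDq]; ring]
  have hpair := floor_half_pair X hni
  have htwo := floor_two_mul (-X)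
  omega
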